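/- arXiv:2103.16543 — 9 statements merged into one kernel-verified Lean document; each statement's English description precedes it below -/
import Mathlib

section
/- Three-dimensional representation of the Rule 54 cubic bulk algebra: For all ξ, ω ∈ ℂ, the matrices W₀(ξ,ω), W₁(ξ,ω), W′₀(ξ,ω), W′₁(ξ,ω), S satisfy S² = I₃ and, for all s₁, s₂, s₃ ∈ {0,1}, both the bulk relation W_{s₁}(ξ,ω) · S · W_{χ(s₁,s₂,s₃)}(ξ,ω) · W′_{s₃}(ξ,ω) = W_{s₁}(ξ,ω) · W′_{s₂}(ξ,ω) · W_{s₃}(ξ,ω) · S and the dual bulk relation W′_{s₁}(ξ,ω) · W_{χ(s₁,s₂,s₃)}(ξ,ω) · W′_{s₃}(ξ,ω) · S = W′_{s₁}(ξ,ω) · S · W′_{s₂}(ξ,ω) · W_{s₃}(ξ,ω). -/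
namespace Rule54

/-- Rule 54 local update. -/
def chi (a b c : ZMod 2) : ZMod 2 := a + b + c + a * c

/-- The auxiliary matrices `W₀(ξ,ω)`, `W₁(ξ,ω)`. -/
noncomputable def W (ξ ω : ℂ) : ZMod 2 → Matrix (Fin 3) (Fin 3) ℂ :=
  fun s => if s = 0 then !![1, 0, 0; ξ, 0, 0; 1, 0, 0] else !![0, ξ, 0; 0, 0, 1; 0, 0, ω]

/-- `W′_s(ξ,ω) = W_s(ω,ξ)`. -/
noncomputable def W' (ξ ω : ℂ) : ZMod 2 → Matrix (Fin 3) (Fin 3) ℂ := W ω ξ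

/-- The delimiter matrix `S`. -/
def S : Matrix (Fin 3) (Fin 3) ℂ := !![1, 0, 0; 0, 0, 1; 0, 1, 0]

set_option maxHeartbeats 1000000 in
/-- Three-dimensional representation of the Rule 54 cubic bulk algebra. -/
theorem bulk_algebra_representation (ξ ω : ℂ) :
    S * S = 1 ∧
    ∀ s1 s2 s3 : ZMod 2,
      W ξ ω s1 * S * W ξ ω (chi s1 s2 s3) * W' ξ ω s3
        = W ξ ω s1 * W' ξ ω s2 * W ξ ω s3 * S ∧
      W' ξ ω s1 * W ξ ω (chi s1 s2 s3) * W' ξ ω s3 * S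
        = W' ξ ω s1 * S * W' ξ ω s2 * W ξ ω s3 := by
  have w0 : W ξ ω 0 = !![1, 0, 0; ξ, 0, 0; 1, 0, 0] := if_pos rfl
  have w1 : W ξ ω 1 = !![0, ξ, 0; 0, 0, 1; 0, 0, ω] := if_neg (by decide)
  have v0 : W' ξ ω 0 = !![1, 0, 0; ω, 0, 0; 1, 0, 0] := by
    show W ω ξ 0 = _; exact if_pos rfl
  have v1 : W' ξ ω 1 = !![0, ω, 0; 0, 0, 1; 0, 0, ξ] := by
    show W ω ξ 1 = _; exact if_neg (by decide)
  constructor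
  · rw [show (1 : Matrix (Fin 3) (Fin 3) ℂ) = !![1,0,0;0,1,0;0,0,1] from Matrix.one_fin_three]
    simp [S, Matrix.mul_fin_three]
  · have hs : ∀ s : ZMod 2, s = 0 ∨ s = 1 := by decide
    intro s1 s2 s3
    rcases hs s1 with rfl | rfl <;> rcases hs s2 with rfl | rfl <;> rcases hs s3 with rfl | rfl <;>
      constructor <;>
      · simp only [show chi 0 0 0 = 0 from by decide, show chi 0 0 1 = 1 from by decide,
          show chi 0 1 0 = 1 from by decide, show chi 0 1 1 = 0 from by decide,
          show chi 1 0 0 = 1 from by decide, show chi 1 0 1 = 1 from by decide,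
          show chi 1 1 0 = 0 from by decide, show chi 1 1 1 = 0 from by decide,
          w0, w1, v0, v1, S]
        ext i j
        fin_cases i <;> fin_cases j <;>
          simp [Matrix.mul_apply, Fin.sum_univ_three] <;>
            first
            | ring1
            | (right; rfl)
            | rfl

end Rule54
end

section
/- Right boundary vectors for conditional driving: Let γ, δ, Λ_R ∈ ℂ with δ ≠ 1 and Λ_R ≠ 0, and set ξ = Λ_R(γ − Λ_R)/(δ − 1) and ω = ((γ + δ − 1) − δΛ_R)/((δ − 1)Λ_R²). Define the column vectors in ℂ³: r′₀ = (γ(δ−1)Λ_R, (δ−1)δ, (δ−1)δΛ_R²)ᵀ, r′₁ = ((γ − γδ + δ − 1)Λ_R, −(δ−1)², −(δ−1)²Λ_R²)ᵀ, r₀₀ = (γ(δ−1)Λ_R, δ(γ + δ − δΛ_R − 1), (δ−1)δΛ_R²)ᵀ, r₀₁ = (−(δ−1)Λ_R(γ − Λ_R), −(δ−1)(γ + δ − δΛ_R − 1), −(δ−1)²Λ_R²)ᵀ, r₁₀ = (δΛ_R(γ − Λ_R), γ(δ−1)Λ_R, γΛ_R²(γ − Λ_R))ᵀ, r₁₁ =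 (−(γ−1)(δ−1)Λ_R, −(γ−1)(δ−1)Λ_R, −(γ−1)Λ_R²(γ − Λ_R))ᵀ. Then, with U^R = [[γ,γ,0,0],[1−γ,1−γ,0,0],[0,0,δ,δ],[0,0,1−δ,1−δ]] in the basis ordered (00,01,10,11), for all t₁, t₂, t₃ ∈ {0,1}: (a) Σ_{s₁,s₂∈{0,1}} (U^R)_{(t₁t₂),(s₁s₂)} r_{s₁s₂} = Λ_R · W′_{t₁}(ξ,ω) · S · r′_{t₂}, and (b) W′_{t₁}(ξ,ω) · W_{χ(t₁,t₂,t₃)}(ξ,ω) · r′_{t₃} = W′_{t₁}(ξ,ω) · S · r_{t₂t₃}. -/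
namespace Rule54

/-- The conditional right-driving 4×4 stochastic matrix
`U^R = [[γ,γ,0,0],[1−γ,1−γ,0,0],[0,0,δ,δ],[0,0,1−δ,1−δ]]`,
indexed by pairs of bits in the order (00,01,10,11). -/
noncomputable def URcond (γ δ : ℂ) : Matrix (ZMod 2 × ZMod 2) (ZMod 2 × ZMod 2) ℂ :=
  fun t s =>
    if t.1 = s.1 then
      if s.1 = 0 then (if t.2 = 0 then γ else 1 - γ)
      else (if t.2 = 0 then δ else 1 - δ)
    else 0

/-- The right boundary vectors `r′₀, r′₁`. -/
noncomputable def rv' (γ δ ΛR : ℂ) : ZMod 2 → Fin 3 → ℂ :=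
  fun s =>
    if s = 0 then ![γ * (δ - 1) * ΛR, (δ - 1) * δ, (δ - 1) * δ * ΛR ^ 2]
    else ![(γ - γ * δ + δ - 1) * ΛR, -(δ - 1) ^ 2, -(δ - 1) ^ 2 * ΛR ^ 2]

/-- The right boundary vectors `r₀₀, r₀₁, r₁₀, r₁₁`. -/
noncomputable def rv (γ δ ΛR : ℂ) : ZMod 2 × ZMod 2 → Fin 3 → ℂ :=
  fun s =>
    if s.1 = 0 then
      if s.2 = 0 then
        ![γ * (δ - 1) * ΛR, δ * (γ + δ - δ * ΛR - 1), (δ - 1) * δ * ΛR ^ 2]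
      else
        ![-(δ - 1) * ΛR * (γ - ΛR), -(δ - 1) * (γ + δ - δ * ΛR - 1), -(δ - 1) ^ 2 * ΛR ^ 2]
    else
      if s.2 = 0 then
        ![δ * ΛR * (γ - ΛR), γ * (δ - 1) * ΛR, γ * ΛR ^ 2 * (γ - ΛR)]
      else
        ![-(γ - 1) * (δ - 1) * ΛR, -(γ - 1) * (δ - 1) * ΛR, -(γ - 1) * ΛR ^ 2 * (γ - ΛR)]

lemma chi000 : chi 0 0 0 = 0 := rfl
lemma chi001 : chi 0 0 1 = 1 := rfl
lemma chi010 : chi 0 1 0 = 1 := rfl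
lemma chi011 : chi 0 1 1 = 0 := rfl
lemma chi100 : chi 1 0 0 = 1 := rfl
lemma chi101 : chi 1 0 1 = 1 := rfl
lemma chi110 : chi 1 1 0 = 0 := rfl
lemma chi111 : chi 1 1 1 = 0 := rfl

lemma sum_zmod2 (f : ZMod 2 → ℂ) : ∑ x : ZMod 2, f x = f 0 + f 1 :=
  Fin.sum_univ_two f

set_option maxHeartbeats 8000000 in
/-- Right boundary vectors for conditional driving solve the right boundary equations. -/
theorem right_boundary_vectors (γ δ ΛR : ℂ) (hδ : δ ≠ 1) (hR : ΛR ≠ 0)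
    (ξ ω : ℂ) (hξ : ξ = ΛR * (γ - ΛR) / (δ - 1))
    (hω : ω = ((γ + δ - 1) - δ * ΛR) / ((δ - 1) * ΛR ^ 2)) :
    ∀ t1 t2 t3 : ZMod 2,
      (∑ s1 : ZMod 2, ∑ s2 : ZMod 2, URcond γ δ (t1, t2) (s1, s2) • rv γ δ ΛR (s1, s2))
          = ΛR • (W' ξ ω t1 * S).mulVec (rv' γ δ ΛR t2) ∧
      (W' ξ ω t1 * W ξ ω (chi t1 t2 t3)).mulVec (rv' γ δ ΛR t3)
          = (W' ξ ω t1 * S).mulVec (rv γ δ ΛR (t2, t3)) := by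
  have h2 : (2 : ZMod 2) = 0 := rfl
  have h3 : (3 : ZMod 2) = 1 := rfl
  have h4 : (4 : ZMod 2) = 0 := rfl
  have h11 : (1 + 1 : ZMod 2) = 0 := rfl
  have hδ' : δ - 1 ≠ 0 := sub_ne_zero.mpr hδ
  have two : ∀ x : ZMod 2, x = 0 ∨ x = 1 := by decide
  intro t1 t2 t3
  rcases two t1 with rfl | rfl <;> rcases two t2 with rfl | rfl <;>
    rcases two t3 with rfl | rfl <;>
  constructor <;>
  · funext i
    fin_cases i <;>
    · simp only [URcond, rv, rv', W, W', S, chi000, chi001, chi010, chi011, chi100, chi101, chi110, chi111, Matrix.mulVec, Matrix.mul_apply,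
        Fin.sum_univ_three, Finset.sum_apply, Pi.smul_apply, smul_eq_mul,
        Fin.sum_univ_succ, Finset.sum_singleton, Fin.isValue,
        Matrix.cons_val_zero, Matrix.cons_val_one, Matrix.head_cons, Matrix.cons_val_two,
        Matrix.tail_cons, Matrix.of_apply, Matrix.cons_val', Matrix.empty_val',
        Matrix.cons_val_fin_one, Matrix.head_fin_const, sum_zmod2, Matrix.vecHead, Matrix.vecTail,
        Matrix.cons_val, Fin.succ_zero_eq_one, Fin.succ_one_eq_two, dotProduct, ite_true, ↓reduceIte, one_ne_zero, ite_false]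
      try norm_num [h2, h3, h4, h11]
      try simp only [hξ, hω, Matrix.vecHead, Matrix.vecTail, Matrix.cons_val_zero,
        Matrix.cons_val_one, Matrix.head_cons, Function.comp_apply]
      try field_simp
      try ring
      try tauto

end Rule54
end

section
/- Characteristic equation of the NESS orbital: Let α, β, γ, δ, Λ_L, Λ_R ∈ ℂ with β ≠ 1, δ ≠ 1, Λ_L ≠ 0 and Λ_R ≠ 0. Suppose the spectral-parameter compatibility conditions hold: ((α + β − 1) − βΛ_L)/((β − 1)Λ_L²) = Λ_R(γ − Λ_R)/(δ − 1) and Λ_L(α − Λ_L)/(β − 1) = ((γ + δ − 1) − δΛ_R)/((δ − 1)Λ_R²). Then Λ := Λ_L·Λ_R satisfies (Λ − 1)·(Λ³ + (1 − αγ)Λ² + βδ·Λ − (α + β − 1)(γ + δ − 1)(Λ + 1)) = 0. -/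
/-- Characteristic equation of the NESS orbital of the boundary-driven Rule 54 automaton:
if the spectral parameters obtained from the left and right boundary equations agree,
then `Λ = Λ_L Λ_R` is a root of the characteristic polynomial. -/
theorem ness_orbital_characteristic_equation
    (α β γ δ ΛL ΛR : ℂ) (hβ : β ≠ 1) (hδ : δ ≠ 1) (hL : ΛL ≠ 0) (hR : ΛR ≠ 0)
    (h1 : ((α + β - 1) - β * ΛL) / ((β - 1) * ΛL ^ 2) = ΛR * (γ - ΛR) / (δ - 1))
    (h2 : ΛL * (α - ΛL) / (β - 1) = ((γ + δ - 1) - δ * ΛR) / ((δ - 1) * ΛR ^ 2)) :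
    (ΛL * ΛR - 1) *
      ((ΛL * ΛR) ^ 3 + (1 - α * γ) * (ΛL * ΛR) ^ 2 + β * δ * (ΛL * ΛR)
        - (α + β - 1) * (γ + δ - 1) * (ΛL * ΛR + 1)) = 0 := by
  have hB : β - 1 ≠ 0 := sub_ne_zero.mpr hβ
  have hD : δ - 1 ≠ 0 := sub_ne_zero.mpr hδ
  have hX : (β - 1) * ΛL ^ 2 ≠ 0 := mul_ne_zero hB (pow_ne_zero 2 hL)
  have hY : (δ - 1) * ΛR ^ 2 ≠ 0 := mul_ne_zero hD (pow_ne_zero 2 hR)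
  have e1 : ((α + β - 1) - β * ΛL) * (δ - 1)
      = ΛR * (γ - ΛR) * ((β - 1) * ΛL ^ 2) := (div_eq_div_iff hX hD).mp h1
  have e2 : ΛL * (α - ΛL) * ((δ - 1) * ΛR ^ 2)
      = ((γ + δ - 1) - δ * ΛR) * (β - 1) := (div_eq_div_iff hB hY).mp h2
  have key : (β - 1) * (δ - 1) * ((ΛL * ΛR - 1) *
      ((ΛL * ΛR) ^ 3 + (1 - α * γ) * (ΛL * ΛR) ^ 2 + β * δ * (ΛL * ΛR)
        - (α + β - 1) * (γ + δ - 1) * (ΛL * ΛR + 1))) = 0 := by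
    linear_combination
      ((δ - 1) * (ΛL * ΛR) ^ 2 + (β - 1) * (γ + δ - 1)) * e1
      + (-((β - 1) * (ΛL * ΛR) ^ 2 + (δ - 1) * (α + β - 1))
          + (((α + β - 1) - β * ΛL) * (δ - 1) - ΛR * (γ - ΛR) * ((β - 1) * ΛL ^ 2))) * e2
  have := mul_ne_zero hB hD
  exact (mul_eq_zero.mp key).resolve_left this
end

section
/- The two-parameter transfer matrix solves the patch-state-ansatz bulk equations: For ξ, ω ∈ ℂ let 𝒯(ξ,ω) be the 4×4 matrix, with rows and columns indexed by pairs of bits in the order (00,01,10,11), 𝒯(ξ,ω) = [[1,1,ξ,1],[ξω,ξω,1,ω],[ω,ω,ξω,ω],[ξ,ξ,ξ,ξω]], and set X_{s s′ t t′} := 𝒯(ξ,ω)_{(s s′),(t t′)} and X′_{s s′ t t′} := 𝒯(ω,ξ)_{(s s′),(t t′)}. Then for all s, s′, u, u′ ∈ {0,1} the two bulk equations hold: X′_{0 0 s s′} · X′_{s s′ u u′} · X′_{u u′ 0 0} · X′_{0 0 0 0} = X_{0 0 χ(0,s,s′) s′} · X_{χ(0,s,s′) s′ χ(s′,u,u′)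 u′} · X_{χ(s′,u,u′) u′ χ(u′,0,0) 0} · X_{χ(u′,0,0) 0 0 0}, and X_{0 0 0 0} · X_{0 0 s s′} · X_{s s′ u u′} · X_{u u′ 0 0} = X′_{0 0 0 χ(0,0,s)} · X′_{0 χ(0,0,s) s χ(s,s′,u)} · X′_{s χ(s,s′,u) u χ(u,u′,0)} · X′_{u χ(u,u′,0) 0 0}. -/
namespace Rule54

/-- Rule 54 local update on bits: `χ(s₁,s₂,s₃) = s₁ + s₂ + s₃ + s₁s₃ (mod 2)`. -/
def chiB (a b c : Bool) : Bool := xor a (xor b (xor c (a && c)))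

/-- The two-parameter transfer matrix `𝒯(ξ,ω)` of the patch state ansatz, with rows and
columns indexed by pairs of bits in the order (00,01,10,11):
`𝒯(ξ,ω) = [[1,1,ξ,1],[ξω,ξω,1,ω],[ω,ω,ξω,ω],[ξ,ξ,ξ,ξω]]`. -/
def Tm (ξ ω : ℂ) : Bool × Bool → Bool × Bool → ℂ
  | (false, false), (true, false) => ξ
  | (false, false), _ => 1
  | (false, true), (true, false) => 1
  | (false, true), (true, true) => ω
  | (false, true), _ => ξ * ω
  | (true, false), (true, false) => ξ * ω
  | (true, false), _ => ω
  | (true, true), (true, true) => ξ * ω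
  | (true, true), _ => ξ

/-- `X_{s s′ t t′} = 𝒯(ξ,ω)_{(s s′),(t t′)}`; the primed tensor is `X′ = X` with `ξ,ω` swapped. -/
def X (ξ ω : ℂ) (a b c d : Bool) : ℂ := Tm ξ ω (a, b) (c, d)

/-- The two-parameter transfer matrix solves the patch-state-ansatz bulk equations. -/
theorem transfer_matrix_solves_bulk_psa (ξ ω : ℂ) (s s' u u' : Bool) :
    X ω ξ false false s s' * X ω ξ s s' u u' * X ω ξ u u' false false
        * X ω ξ false false false false
      = X ξ ω false false (chiB false s s') s'
        * X ξ ω (chiB false s s') s' (chiB s' u u') u'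
        * X ξ ω (chiB s' u u') u' (chiB u' false false) false
        * X ξ ω (chiB u' false false) false false false ∧
    X ξ ω false false false false * X ξ ω false false s s' * X ξ ω s s' u u'
        * X ξ ω u u' false false
      = X ω ξ false false false (chiB false false s)
        * X ω ξ false (chiB false false s) s (chiB s s' u)
        * X ω ξ s (chiB s s' u) u (chiB u u' false)
        * X ω ξ u (chiB u u' false) false false := by
  cases s <;> cases s' <;> cases u <;> cases u' <;> constructor <;> simp [X, Tm, chiB, mul_comm] <;> ring

end Rule54
end

section
/- Characteristic polynomial of the Rule 54 Gibbs transfer matrix: For all ξ, ω ∈ ℂ, the characteristic polynomial of the 3×3 matrix T(ξ,ω) = [[1+ξω, ω, ξ],[1+ξ, ξω, ξ],[1+ω, ω, ξω]] is det(λ·I₃ − T(ξ,ω)) = λ³ − (1 + 3ξω)λ² − (ξ + ω + ξω(1 − 3ξω))λ − ξω(1 − ξω)². Consequently, the partition sums Z_{2k} := trace(T(ξ,ω)^k) satisfy the linear recurrence Z_{2k+2} = (1 + 3ξω)·Z_{2k} + (ξ + ω + ξω(1 − 3ξω))·Z_{2k−2} + ξω(ξω − 1)²·Z_{2k−4} for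 all k ≥ 2. -/
namespace Rule54

/-- The Rule 54 Gibbs transfer matrix `T(ξ,ω)`. -/
noncomputable def T3 (ξ ω : ℂ) : Matrix (Fin 3) (Fin 3) ℂ :=
  !![1 + ξ * ω, ω, ξ; 1 + ξ, ξ * ω, ξ; 1 + ω, ω, ξ * ω]

set_option maxHeartbeats 2000000 in
lemma cayley (ξ ω : ℂ) :
    T3 ξ ω ^ 3 = (1 + 3 * ξ * ω) • T3 ξ ω ^ 2
      + (ξ + ω + ξ * ω * (1 - 3 * ξ * ω)) • T3 ξ ω
      + (ξ * ω * (ξ * ω - 1) ^ 2) • (1 : Matrix (Fin 3) (Fin 3) ℂ) := by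
  have h2 : T3 ξ ω ^ 2 = T3 ξ ω * T3 ξ ω := sq (T3 ξ ω)
  have h3 : T3 ξ ω ^ 3 = T3 ξ ω * T3 ξ ω * T3 ξ ω := by rw [pow_succ, h2]
  rw [h3, h2]
  ext i j
  fin_cases i <;> fin_cases j <;>
    simp [T3, Matrix.mul_apply, Fin.sum_univ_three, Matrix.one_apply] <;> ring

/-- Characteristic polynomial of the Rule 54 Gibbs transfer matrix, and the resulting
linear recurrence for the partition sums `Z_{2k} = trace (T(ξ,ω)^k)`. -/
theorem transfer_matrix_charpoly_and_recurrence (ξ ω : ℂ) :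
    (∀ lam : ℂ,
      Matrix.det (lam • (1 : Matrix (Fin 3) (Fin 3) ℂ) - T3 ξ ω) =
        lam ^ 3 - (1 + 3 * ξ * ω) * lam ^ 2
          - (ξ + ω + ξ * ω * (1 - 3 * ξ * ω)) * lam - ξ * ω * (1 - ξ * ω) ^ 2) ∧
    (∀ k : ℕ, 2 ≤ k →
      Matrix.trace (T3 ξ ω ^ (k + 1)) =
        (1 + 3 * ξ * ω) * Matrix.trace (T3 ξ ω ^ k)
          + (ξ + ω + ξ * ω * (1 - 3 * ξ * ω)) * Matrix.trace (T3 ξ ω ^ (k - 1))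
          + ξ * ω * (ξ * ω - 1) ^ 2 * Matrix.trace (T3 ξ ω ^ (k - 2))) := by
  constructor
  · intro lam
    simp [T3, Matrix.det_fin_three, Matrix.one_apply]
    ring
  · intro k hk
    obtain ⟨m, rfl⟩ : ∃ m, k = m + 2 := ⟨k - 2, by omega⟩
    have hpow : T3 ξ ω ^ (m + 2 + 1) = T3 ξ ω ^ m * T3 ξ ω ^ 3 := by
      rw [← pow_add]
    rw [hpow, cayley ξ ω]
    simp only [Matrix.mul_add, Matrix.mul_smul, Matrix.trace_add, Matrix.trace_smul,
      mul_one, Matrix.mul_one, smul_eq_mul]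
    have e1 : T3 ξ ω ^ m * T3 ξ ω ^ 2 = T3 ξ ω ^ (m + 2) := (pow_add _ _ _).symm
    have e2 : T3 ξ ω ^ m * T3 ξ ω = T3 ξ ω ^ (m + 2 - 1) := by
      rw [← pow_succ]; norm_num
    rw [e1, e2]
    norm_num
end Rule54
end

section
/- Explicit leading eigenvectors of the Rule 54 transfer matrix: Let ξ, ω, λ ∈ ℂ satisfy λ³ − (1 + 3ξω)λ² − (ξ + ω + ξω(1 − 3ξω))λ − ξω(1 − ξω)² = 0. Then the row vector l = (ω((λ − ξω)² − ξω), ω²(λ − ξω + ξ), ξω(λ − ξω + ω)) and the column vector r = (ω(λ − ξω + ξ), (λ − ξω)² − λ − ξ, ω(λ − ξω + ω))ᵀ satisfy l·T(ξ,ω) = λ·l and T(ξ,ω)·r = λ·r, where T(ξ,ω) = [[1+ξω, ω, ξ],[1+ξ, ξω, ξ],[1+ω, ω, ξω]]. -/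
namespace Rule54

/-- Explicit leading left and right eigenvectors of the Rule 54 transfer matrix. -/
theorem transfer_matrix_eigenvectors (ξ ω lam : ℂ)
    (hlam : lam ^ 3 - (1 + 3 * ξ * ω) * lam ^ 2
      - (ξ + ω + ξ * ω * (1 - 3 * ξ * ω)) * lam - ξ * ω * (1 - ξ * ω) ^ 2 = 0) :
    Matrix.vecMul
        ![ω * ((lam - ξ * ω) ^ 2 - ξ * ω), ω ^ 2 * (lam - ξ * ω + ξ),
          ξ * ω * (lam - ξ * ω + ω)] (T3 ξ ω)
      = lam • ![ω * ((lam - ξ * ω) ^ 2 - ξ * ω), ω ^ 2 * (lam - ξ * ω + ξ),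
          ξ * ω * (lam - ξ * ω + ω)] ∧
    (T3 ξ ω).mulVec
        ![ω * (lam - ξ * ω + ξ), (lam - ξ * ω) ^ 2 - lam - ξ, ω * (lam - ξ * ω + ω)]
      = lam • ![ω * (lam - ξ * ω + ξ), (lam - ξ * ω) ^ 2 - lam - ξ,
          ω * (lam - ξ * ω + ω)] := by
  constructor
  · funext i
    fin_cases i <;>
      simp [T3, Matrix.vecMul, dotProduct, Fin.sum_univ_three]
    · linear_combination (-ω) * hlam
    · ring
    · ring
  · funext i
    fin_cases i <;>
      simp [T3, Matrix.mulVec, dotProduct, Fin.sum_univ_three]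
    · ring
    · linear_combination -hlam
    · ring

end Rule54
end

section
/- Yang–Yang form of the configurational entropy of Rule 54: Let n₊, n₋ ∈ (0,1) satisfy 2n₊ < 1 + n₋ and 2n₋ < 1 + n₊, and set n_ν^tot := 1 − n_ν + n_{−ν} for ν ∈ {+,−}. Then lim_{k→∞} (1/k)·log α_k(⌊k·n₊⌋, ⌊k·n₋⌋) = s[n₊,n₋], where s[n₊,n₋] := −Σ_{ν∈{+,−}} ( n_ν·log(n_ν/n_ν^tot) + (n_ν^tot − n_ν)·log(1 − n_ν/n_ν^tot) ). -/
open Filter Topology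

namespace Rule54

/-- The coefficient `α_k(x,y)` of the Rule 54 partition function:
`α_k(x,y) = (k(k+x+y)/((k+x−y)(k−x+y)))·C(k+x−y, y)·C(k−x+y, x)` whenever
`k+x−y > 0` and `k−x+y > 0`, and `0` otherwise. -/
def alphaQ (k x y : ℕ) : ℚ :=
  if 0 < (k : ℤ) + x - y ∧ 0 < (k : ℤ) - x + y then
    ((k : ℚ) * ((k : ℚ) + x + y))
        / ((((k : ℤ) + x - y : ℤ) : ℚ) * (((k : ℤ) - x + y : ℤ) : ℚ))
      * (Nat.choose ((k : ℤ) + x - y).toNat y : ℚ)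
      * (Nat.choose ((k : ℤ) - x + y).toNat x : ℚ)
  else 0

lemma cast_tendsto_atTop {a : ℕ → ℕ} {A : ℝ} (hA : 0 < A)
    (ha : Tendsto (fun k => (a k : ℝ) / k) atTop (𝓝 A)) :
    Tendsto (fun k => (a k : ℝ)) atTop atTop := by
  have h1 : Tendsto (fun k : ℕ => (A / 2) * (k : ℝ)) atTop atTop :=
    Tendsto.const_mul_atTop (by linarith) tendsto_natCast_atTop_atTop
  apply tendsto_atTop_mono' _ _ h1
  have h2 : ∀ᶠ k in atTop, A / 2 < (a k : ℝ) / k :=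
    ha.eventually (eventually_gt_nhds (by linarith))
  filter_upwards [h2, eventually_gt_atTop 0] with k hk hk0
  have hk0' : (0 : ℝ) < k := by exact_mod_cast hk0
  exact ((lt_div_iff₀ hk0').1 hk).le

lemma log_div_tendsto_zero {a : ℕ → ℕ} {A : ℝ} (hA : 0 < A)
    (ha : Tendsto (fun k => (a k : ℝ) / k) atTop (𝓝 A)) :
    Tendsto (fun k => Real.log (a k) / k) atTop (𝓝 0) := by
  have h1 : Tendsto (fun k : ℕ => Real.log ((a k : ℝ) / k) / k) atTop (𝓝 0) :=
    Tendsto.div_atTop (ha.log hA.ne') tendsto_natCast_atTop_atTop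
  have h2 : Tendsto (fun k : ℕ => Real.log k / k) atTop (𝓝 0) := by
    have := Real.isLittleO_log_id_atTop.tendsto_div_nhds_zero
    exact this.comp tendsto_natCast_atTop_atTop
  have h3 := h1.add h2
  rw [add_zero] at h3
  apply h3.congr'
  filter_upwards [(cast_tendsto_atTop hA ha).eventually_ge_atTop 1,
    eventually_gt_atTop 0] with k hk hk0
  have hk0' : (0 : ℝ) < k := by exact_mod_cast hk0
  have hak : (a k : ℝ) ≠ 0 := by linarith
  rw [Real.log_div hak hk0'.ne', sub_div, sub_add_cancel]

lemma log_factorial_asymp {a : ℕ → ℕ} {A : ℝ} (hA : 0 < A)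
    (ha : Tendsto (fun k => (a k : ℝ) / k) atTop (𝓝 A)) :
    Tendsto (fun k => (Real.log (Nat.factorial (a k) : ℝ) - (a k : ℝ) * Real.log k + (a k : ℝ)) / k)
      atTop (𝓝 (A * Real.log A)) := by
  have hat : Tendsto (fun k => (a k : ℝ)) atTop atTop := cast_tendsto_atTop hA ha
  have hatn : Tendsto a atTop atTop := tendsto_natCast_atTop_iff.mp hat
  -- stirling term
  have hsp : (0 : ℝ) < Real.sqrt Real.pi := Real.sqrt_pos.mpr Real.pi_pos
  have hs : Tendsto (fun k => Real.log (Stirling.stirlingSeq (a k)) / k) atTop (𝓝 0) :=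
    Tendsto.div_atTop (((Stirling.tendsto_stirlingSeq_sqrt_pi.comp hatn).log hsp.ne'))
      tendsto_natCast_atTop_atTop
  -- sqrt term
  have hl : Tendsto (fun k => Real.log (a k) / k) atTop (𝓝 0) := log_div_tendsto_zero hA ha
  have hc2 : Tendsto (fun k : ℕ => Real.log 2 / k) atTop (𝓝 0) :=
    Tendsto.div_atTop tendsto_const_nhds tendsto_natCast_atTop_atTop
  have hsq : Tendsto (fun k => Real.log (Real.sqrt (2 * (a k : ℝ))) / k) atTop (𝓝 0) := by
    have h := ((hc2.add hl).div_const 2)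
    rw [add_zero, zero_div] at h
    apply h.congr'
    filter_upwards [hat.eventually_ge_atTop 1] with k hk
    have hak : (0 : ℝ) < (a k : ℝ) := by linarith
    rw [Real.log_sqrt (by positivity), Real.log_mul two_ne_zero hak.ne']
    ring
  -- main term
  have hmain : Tendsto (fun k => ((a k : ℝ) / k) * Real.log ((a k : ℝ) / k)) atTop
      (𝓝 (A * Real.log A)) := ha.mul (ha.log hA.ne')
  have htot := (hs.add hsq).add hmain
  rw [add_zero, zero_add] at htot
  apply htot.congr'
  filter_upwards [hat.eventually_ge_atTop 1, eventually_gt_atTop 0] with k hk hk0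
  have hak : (0 : ℝ) < (a k : ℝ) := by linarith
  have hk0' : (0 : ℝ) < k := by exact_mod_cast hk0
  -- stirling identity
  have hD : (0 : ℝ) < Real.sqrt (2 * (a k : ℝ)) * ((a k : ℝ) / Real.exp 1) ^ (a k) := by
    positivity
  have hfact : Stirling.stirlingSeq (a k)
      * (Real.sqrt (2 * (a k : ℝ)) * ((a k : ℝ) / Real.exp 1) ^ (a k)) = (Nat.factorial (a k) : ℝ) := by
    rw [Stirling.stirlingSeq, div_mul_cancel₀ _ hD.ne']
  have hspos : (0 : ℝ) < Stirling.stirlingSeq (a k) := by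
    rw [Stirling.stirlingSeq]
    exact div_pos (by exact_mod_cast (a k).factorial_pos) hD
  have hL : Real.log (Nat.factorial (a k) : ℝ) = Real.log (Stirling.stirlingSeq (a k))
      + Real.log (Real.sqrt (2 * (a k : ℝ)))
      + (a k : ℝ) * (Real.log (a k) - 1) := by
    rw [← hfact, Real.log_mul hspos.ne' hD.ne',
      Real.log_mul (Real.sqrt_pos.mpr (by positivity)).ne' (by positivity),
      Real.log_pow, Real.log_div hak.ne' (Real.exp_ne_zero 1), Real.log_exp]
    ring
  rw [hL, Real.log_div hak.ne' hk0'.ne']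
  ring

lemma binom_asymp {b c : ℕ → ℕ} {B C : ℝ} (hB : 0 < B) (hC : 0 < C)
    (hb : Tendsto (fun k => (b k : ℝ) / k) atTop (𝓝 B))
    (hc : Tendsto (fun k => (c k : ℝ) / k) atTop (𝓝 C)) :
    Tendsto (fun k => Real.log (Nat.choose (b k + c k) (b k)) / k) atTop
      (𝓝 ((B + C) * Real.log (B + C) - B * Real.log B - C * Real.log C)) := by
  have ha : Tendsto (fun k => ((b k + c k : ℕ) : ℝ) / k) atTop (𝓝 (B + C)) := by
    have := hb.add hc
    apply this.congr
    intro k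
    push_cast
    rw [add_div]
  have hBC : 0 < B + C := by linarith
  have hFa := log_factorial_asymp hBC ha
  have hFb := log_factorial_asymp hB hb
  have hFc := log_factorial_asymp hC hc
  have htot := (hFa.sub hFb).sub hFc
  apply htot.congr'
  filter_upwards [(cast_tendsto_atTop hB hb).eventually_ge_atTop 1,
    (cast_tendsto_atTop hC hc).eventually_ge_atTop 1, eventually_gt_atTop 0] with k hkb hkc hk0
  have hble : b k ≤ b k + c k := Nat.le_add_right _ _
  have hch : (Nat.choose (b k + c k) (b k) : ℝ) * (Nat.factorial (b k) : ℝ)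
      * (Nat.factorial (c k) : ℝ) = (Nat.factorial (b k + c k) : ℝ) := by
    have := Nat.choose_mul_factorial_mul_factorial hble
    rw [Nat.add_sub_cancel_left] at this
    exact_mod_cast this
  have hchpos : (0 : ℝ) < (Nat.choose (b k + c k) (b k) : ℝ) := by
    exact_mod_cast Nat.choose_pos hble
  have hfb : (0 : ℝ) < (Nat.factorial (b k) : ℝ) := by exact_mod_cast (b k).factorial_pos
  have hfc : (0 : ℝ) < (Nat.factorial (c k) : ℝ) := by exact_mod_cast (c k).factorial_pos
  have hlog : Real.log (Nat.factorial (b k + c k) : ℝ)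
      = Real.log (Nat.choose (b k + c k) (b k) : ℝ)
        + Real.log (Nat.factorial (b k) : ℝ) + Real.log (Nat.factorial (c k) : ℝ) := by
    rw [← hch, Real.log_mul (by positivity) hfc.ne', Real.log_mul hchpos.ne' hfb.ne']
  have hcast : ((b k + c k : ℕ) : ℝ) = (b k : ℝ) + (c k : ℝ) := by push_cast; ring
  rw [hcast, hlog]
  ring

/-- Yang–Yang form of the configurational entropy of Rule 54: the exponential growth rate
of `α_k(⌊k n₊⌋, ⌊k n₋⌋)` is the entropy density `s[n₊,n₋]`. -/
theorem configurational_entropy_yang_yang (np nm : ℝ)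
    (hnp0 : 0 < np) (hnp1 : np < 1) (hnm0 : 0 < nm) (hnm1 : nm < 1)
    (hp : 2 * np < 1 + nm) (hm : 2 * nm < 1 + np) :
    Tendsto
      (fun k : ℕ =>
        Real.log ((alphaQ k ⌊(k : ℝ) * np⌋₊ ⌊(k : ℝ) * nm⌋₊ : ℚ) : ℝ) / k)
      atTop
      (𝓝 (-(np * Real.log (np / (1 - np + nm))
            + ((1 - np + nm) - np) * Real.log (1 - np / (1 - np + nm))
            + nm * Real.log (nm / (1 - nm + np))
            + ((1 - nm + np) - nm) * Real.log (1 - nm / (1 - nm + np))))) := by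
  set x : ℕ → ℕ := fun k => ⌊(k : ℝ) * np⌋₊ with hxdef
  set y : ℕ → ℕ := fun k => ⌊(k : ℝ) * nm⌋₊ with hydef
  -- basic limits
  have hx : Tendsto (fun k => (x k : ℝ) / k) atTop (𝓝 np) := by
    have := (tendsto_nat_floor_mul_div_atTop (R := ℝ) hnp0.le).comp
      (tendsto_natCast_atTop_atTop (R := ℝ))
    simpa [Function.comp_def, hxdef, mul_comm] using this
  have hy : Tendsto (fun k => (y k : ℝ) / k) atTop (𝓝 nm) := by
    have := (tendsto_nat_floor_mul_div_atTop (R := ℝ) hnm0.le).comp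
      (tendsto_natCast_atTop_atTop (R := ℝ))
    simpa [Function.comp_def, hydef, mul_comm] using this
  have h1 : Tendsto (fun k : ℕ => ((fun k : ℕ => k) k : ℝ) / k) atTop (𝓝 1) := by
    have heq : (fun _ : ℕ => (1 : ℝ)) =ᶠ[atTop] fun k : ℕ => ((fun k : ℕ => k) k : ℝ) / k := by
      filter_upwards [eventually_gt_atTop 0] with k hk
      rw [div_self (by exact_mod_cast hk.ne' : ((k:ℕ):ℝ) ≠ 0)]
    exact tendsto_const_nhds.congr' heq
  -- positivity constants
  have hC1 : (0 : ℝ) < 1 + np - 2 * nm := by linarith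
  have hC2 : (0 : ℝ) < 1 + nm - 2 * np := by linarith
  -- real-level limits for the truncated subtractions
  have hreal1 : Tendsto (fun k : ℕ => ((k : ℝ) + x k - 2 * y k) / k) atTop
      (𝓝 (1 + np - 2 * nm)) := by
    have := (h1.add hx).sub (hy.const_mul 2)
    apply this.congr
    intro k; ring
  have hreal2 : Tendsto (fun k : ℕ => ((k : ℝ) + y k - 2 * x k) / k) atTop
      (𝓝 (1 + nm - 2 * np)) := by
    have := (h1.add hy).sub (hx.const_mul 2)
    apply this.congr
    intro k; ring
  have hpos1 : ∀ᶠ k : ℕ in atTop, 2 * y k ≤ k + x k := by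
    filter_upwards [hreal1.eventually (eventually_gt_nhds hC1), eventually_gt_atTop 0]
      with k hk hk0
    have hk0' : (0 : ℝ) < k := by exact_mod_cast hk0
    have h2 := mul_pos hk hk0'
    rw [div_mul_cancel₀ _ hk0'.ne'] at h2
    have : (2 * (y k : ℝ)) < (k : ℝ) + x k := by linarith
    exact_mod_cast this.le
  have hpos2 : ∀ᶠ k : ℕ in atTop, 2 * x k ≤ k + y k := by
    filter_upwards [hreal2.eventually (eventually_gt_nhds hC2), eventually_gt_atTop 0]
      with k hk hk0
    have hk0' : (0 : ℝ) < k := by exact_mod_cast hk0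
    have h2 := mul_pos hk hk0'
    rw [div_mul_cancel₀ _ hk0'.ne'] at h2
    have : (2 * (x k : ℝ)) < (k : ℝ) + y k := by linarith
    exact_mod_cast this.le
  have hc1 : Tendsto (fun k : ℕ => ((k + x k - 2 * y k : ℕ) : ℝ) / k) atTop
      (𝓝 (1 + np - 2 * nm)) := by
    apply hreal1.congr'
    filter_upwards [hpos1] with k hk
    congr 1
    push_cast [hk]
    ring
  have hc2 : Tendsto (fun k : ℕ => ((k + y k - 2 * x k : ℕ) : ℝ) / k) atTop
      (𝓝 (1 + nm - 2 * np)) := by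
    apply hreal2.congr'
    filter_upwards [hpos2] with k hk
    congr 1
    push_cast [hk]
    ring
  -- limits for the n-sequences
  have hn1 : Tendsto (fun k : ℕ => ((y k + (k + x k - 2 * y k) : ℕ) : ℝ) / k) atTop
      (𝓝 (1 + np - nm)) := by
    have := hy.add hc1
    rw [show nm + (1 + np - 2 * nm) = 1 + np - nm by ring] at this
    apply this.congr
    intro k
    push_cast
    rw [add_div]
  have hn2 : Tendsto (fun k : ℕ => ((x k + (k + y k - 2 * x k) : ℕ) : ℝ) / k) atTop
      (𝓝 (1 + nm - np)) := by
    have := hx.add hc2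
    rw [show np + (1 + nm - 2 * np) = 1 + nm - np by ring] at this
    apply this.congr
    intro k
    push_cast
    rw [add_div]
  have hm' : Tendsto (fun k : ℕ => ((k + x k + y k : ℕ) : ℝ) / k) atTop
      (𝓝 (1 + np + nm)) := by
    have := (h1.add hx).add hy
    apply this.congr
    intro k
    push_cast
    rw [add_div, add_div]
  -- the six limit pieces
  have t0 : Tendsto (fun k : ℕ => Real.log ((fun k : ℕ => k) k) / k) atTop (𝓝 0) :=
    log_div_tendsto_zero one_pos h1
  have t1 : Tendsto (fun k : ℕ => Real.log ((k + x k + y k : ℕ)) / k) atTop (𝓝 0) :=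
    log_div_tendsto_zero (by linarith) hm'
  have t2 : Tendsto (fun k : ℕ => Real.log ((y k + (k + x k - 2 * y k) : ℕ)) / k) atTop (𝓝 0) :=
    log_div_tendsto_zero (by linarith : (0:ℝ) < 1 + np - nm) hn1
  have t3 : Tendsto (fun k : ℕ => Real.log ((x k + (k + y k - 2 * x k) : ℕ)) / k) atTop (𝓝 0) :=
    log_div_tendsto_zero (by linarith : (0:ℝ) < 1 + nm - np) hn2
  have t4 := binom_asymp hnm0 hC1 hy hc1
  have t5 := binom_asymp hnp0 hC2 hx hc2
  have htot := ((((t0.add t1).sub t2).sub t3).add t4).add t5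
  -- identify the limit value
  have hT1 : (0 : ℝ) < 1 - np + nm := by linarith
  have hT2 : (0 : ℝ) < 1 - nm + np := by linarith
  have hval : ((((0 : ℝ) + 0 - 0 - 0)
        + ((nm + (1 + np - 2 * nm)) * Real.log (nm + (1 + np - 2 * nm))
          - nm * Real.log nm - (1 + np - 2 * nm) * Real.log (1 + np - 2 * nm)))
        + ((np + (1 + nm - 2 * np)) * Real.log (np + (1 + nm - 2 * np))
          - np * Real.log np - (1 + nm - 2 * np) * Real.log (1 + nm - 2 * np)))
      = -(np * Real.log (np / (1 - np + nm))
            + ((1 - np + nm) - np) * Real.log (1 - np / (1 - np + nm))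
            + nm * Real.log (nm / (1 - nm + np))
            + ((1 - nm + np) - nm) * Real.log (1 - nm / (1 - nm + np))) := by
    rw [show (1 : ℝ) - np / (1 - np + nm) = (1 + nm - 2 * np) / (1 - np + nm) by
        field_simp; ring,
      show (1 : ℝ) - nm / (1 - nm + np) = (1 + np - 2 * nm) / (1 - nm + np) by
        field_simp; ring,
      Real.log_div hnp0.ne' hT1.ne', Real.log_div hnm0.ne' hT2.ne',
      Real.log_div hC2.ne' hT1.ne', Real.log_div hC1.ne' hT2.ne',
      show nm + (1 + np - 2 * nm) = 1 - nm + np by ring,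
      show np + (1 + nm - 2 * np) = 1 - np + nm by ring]
    ring
  rw [hval] at htot
  -- pointwise identification
  apply htot.congr'
  filter_upwards [hpos1, hpos2, eventually_ge_atTop 1] with k e1 e2 hk1
  have hcond : 0 < (k : ℤ) + x k - y k ∧ 0 < (k : ℤ) - x k + y k := by
    constructor <;> omega
  have htn1 : ((k : ℤ) + x k - y k).toNat = y k + (k + x k - 2 * y k) := by omega
  have htn2 : ((k : ℤ) - x k + y k).toNat = x k + (k + y k - 2 * x k) := by omega
  have hz1 : (k : ℤ) + x k - y k = ((y k + (k + x k - 2 * y k) : ℕ) : ℤ) := by omega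
  have hz2 : (k : ℤ) - x k + y k = ((x k + (k + y k - 2 * x k) : ℕ) : ℤ) := by omega
  have hn1pos : 0 < y k + (k + x k - 2 * y k) := by omega
  have hn2pos : 0 < x k + (k + y k - 2 * x k) := by omega
  have hq : ((alphaQ k (x k) (y k) : ℚ) : ℝ)
      = (k : ℝ) * ((k + x k + y k : ℕ) : ℝ)
          / (((y k + (k + x k - 2 * y k) : ℕ) : ℝ) * ((x k + (k + y k - 2 * x k) : ℕ) : ℝ))
        * (Nat.choose (y k + (k + x k - 2 * y k)) (y k) : ℝ)
        * (Nat.choose (x k + (k + y k - 2 * x k)) (x k) : ℝ) := by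
    rw [alphaQ, if_pos hcond, htn1, htn2, hz1, hz2]
    push_cast
    ring
  have hk0' : (0 : ℝ) < (k : ℝ) := by exact_mod_cast Nat.lt_of_lt_of_le Nat.zero_lt_one hk1
  have hmpos : (0 : ℝ) < ((k + x k + y k : ℕ) : ℝ) := by
    have : 0 < k + x k + y k := by omega
    exact_mod_cast this
  have hn1pos' : (0 : ℝ) < ((y k + (k + x k - 2 * y k) : ℕ) : ℝ) := by exact_mod_cast hn1pos
  have hn2pos' : (0 : ℝ) < ((x k + (k + y k - 2 * x k) : ℕ) : ℝ) := by exact_mod_cast hn2pos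
  have hch1 : (0 : ℝ) < (Nat.choose (y k + (k + x k - 2 * y k)) (y k) : ℝ) := by
    exact_mod_cast Nat.choose_pos (Nat.le_add_right _ _)
  have hch2 : (0 : ℝ) < (Nat.choose (x k + (k + y k - 2 * x k)) (x k) : ℝ) := by
    exact_mod_cast Nat.choose_pos (Nat.le_add_right _ _)
  rw [hq, Real.log_mul (by positivity) hch2.ne', Real.log_mul (by positivity) hch1.ne',
    Real.log_div (by positivity) (by positivity),
    Real.log_mul hk0'.ne' hmpos.ne', Real.log_mul hn1pos'.ne' hn2pos'.ne']
  ring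

end Rule54
end

section
/- Dressed velocities of Rule 54 solitons: Let n₊, n₋ ≥ 0 be real numbers. Then the system of equations 1 − v₊ = (v₊ − v₋)·n₋ and 1 + v₋ = (v₊ − v₋)·n₊ has a unique solution (v₊, v₋) ∈ ℝ², namely v₊ = 1 − 2n₋/(1 + n₊ + n₋) and v₋ = −(1 − 2n₊/(1 + n₊ + n₋)). If, in addition, ϑ₊, ϑ₋ ∈ [0,1] satisfy n_ν = ϑ_ν·(1 − n_ν + n_{−ν}) for ν ∈ {+,−}, then v₊ = 1/(1 + 2ϑ₋) and v₋ = −1/(1 + 2ϑ₊). -/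
/-- Dressed velocities of Rule 54 solitons: the kinematic equations
`1 − v₊ = (v₊ − v₋)n₋` and `1 + v₋ = (v₊ − v₋)n₊` have the unique solution
`v₊ = 1 − 2n₋/(1+n₊+n₋)`, `v₋ = −(1 − 2n₊/(1+n₊+n₋))`; in terms of the filling
functions `ϑ_ν` these read `v₊ = 1/(1+2ϑ₋)`, `v₋ = −1/(1+2ϑ₊)`. -/
theorem rule54_dressed_velocities (np nm : ℝ) (hnp : 0 ≤ np) (hnm : 0 ≤ nm) :
    (∀ v : ℝ × ℝ,
        (1 - v.1 = (v.1 - v.2) * nm ∧ 1 + v.2 = (v.1 - v.2) * np) ↔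
          v = (1 - 2 * nm / (1 + np + nm), -(1 - 2 * np / (1 + np + nm)))) ∧
    (∀ ϑp ϑm : ℝ, ϑp ∈ Set.Icc (0 : ℝ) 1 → ϑm ∈ Set.Icc (0 : ℝ) 1 →
        np = ϑp * (1 - np + nm) → nm = ϑm * (1 - nm + np) →
        1 - 2 * nm / (1 + np + nm) = 1 / (1 + 2 * ϑm) ∧
        -(1 - 2 * np / (1 + np + nm)) = -(1 / (1 + 2 * ϑp))) := by
  have hD : (1 : ℝ) + np + nm > 0 := by linarith
  have hD' : (1 : ℝ) + np + nm ≠ 0 := ne_of_gt hD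
  constructor
  · rintro ⟨v1, v2⟩
    constructor
    · rintro ⟨h1, h2⟩
      have hv1 : v1 = 1 - 2 * nm / (1 + np + nm) := by
        field_simp
        nlinarith [h1, h2]
      have hv2 : v2 = -(1 - 2 * np / (1 + np + nm)) := by
        field_simp
        nlinarith [h1, h2]
      simp [hv1, hv2]
    · intro h
      rw [Prod.mk.injEq] at h
      obtain ⟨h1, h2⟩ := h
      subst h1 h2
      constructor <;> (field_simp; ring)
  · rintro ϑp ϑm ⟨hp0, hp1⟩ ⟨hm0, hm1⟩ hep hem
    have h1 : (1 : ℝ) + 2 * ϑm ≠ 0 := by positivity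
    have h2 : (1 : ℝ) + 2 * ϑp ≠ 0 := by positivity
    constructor
    · field_simp
      nlinarith [hem]
    · rw [neg_inj]
      field_simp
      nlinarith [hep]
end

section
/- Structure of the time-state transfer matrix: Let p_r, p_l ∈ ℝ and let A₀, A₁, A′₀, A′₁, ⟨L|, |R⟩ be the time-state matrices and vectors. Then: (i) (A₀+A₁)|R⟩ = |R⟩ and (A′₀+A′₁)|R⟩ = |R⟩; (ii) ⟨L|(A₀+A₁)(A′₀+A′₁) = ⟨L| and ⟨L|R⟩ = 1 (for 1 + p_r + p_l ≠ 0); (iii) the characteristic polynomial of the transfer matrix M := (A′₀+A′₁)(A₀+A₁) factorizes as det(λ·I₃ − M) = (λ − 1)·(λ² + (p_l + p_r − p_l·p_r)·λ + p_l·p_r); in particular the eigenvalues of M are 1 and Λ_{1,2} = −(1/2)·( p_l + p_r − p_l p_r ∓ √((p_l + p_r − p_l p_r)² − 4 p_l p_r) ), which govern the exponential decay of one-site multi-time correlation functions in the generalized Gibbs states of Rule 54. -/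
namespace Rule54

/-- Time-state matrix `A₀ = [[1−p_r,0,0],[0,0,0],[1,0,0]]`. -/
noncomputable def A0 (pr pl : ℝ) : Matrix (Fin 3) (Fin 3) ℝ :=
  !![1 - pr, 0, 0; 0, 0, 0; 1, 0, 0]

/-- Time-state matrix `A₁ = [[0,p_r,0],[0,0,1],[0,0,0]]`. -/
noncomputable def A1 (pr pl : ℝ) : Matrix (Fin 3) (Fin 3) ℝ :=
  !![0, pr, 0; 0, 0, 1; 0, 0, 0]

/-- Left boundary vector `⟨L| = (1/(1+p_r+p_l))·(1, p_l, p_r)`. -/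
noncomputable def Lvec (pr pl : ℝ) : Fin 3 → ℝ := (1 / (1 + pr + pl)) • ![1, pl, pr]

/-- Right boundary vector `|R⟩ = (1,1,1)ᵀ`. -/
def Rvec : Fin 3 → ℝ := ![1, 1, 1]

lemma detC (pr pl : ℝ) (μ : ℂ) :
    Matrix.det (μ • (1 : Matrix (Fin 3) (Fin 3) ℂ)
        - ((A0 pl pr + A1 pl pr) * (A0 pr pl + A1 pr pl)).map (fun a : ℝ => (a : ℂ)))
      = (μ - 1) * (μ ^ 2 + ((pl : ℂ) + pr - pl * pr) * μ + pl * pr) := by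
  simp [A0, A1, Matrix.det_fin_three, Matrix.mul_apply, Fin.sum_univ_three,
    Matrix.smul_apply, Matrix.sub_apply, Matrix.add_apply, Matrix.map_apply,
    Matrix.one_apply, Matrix.cons_val_zero, Matrix.cons_val_one, Matrix.head_cons,
    Matrix.cons_val', Matrix.empty_val', Matrix.cons_val_fin_one, Matrix.vecHead, Matrix.vecTail]
  push_cast
  ring

/-- Structure of the time-state transfer matrix of Rule 54 (the primed matrices are
`A′_s = A_s` with `p_r` and `p_l` interchanged):
(i) `|R⟩` is a fixed right vector; (ii) `⟨L|` is a fixed left vector with `⟨L|R⟩ = 1`;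
(iii) the characteristic polynomial of `M = (A′₀+A′₁)(A₀+A₁)` factorizes as
`(λ−1)(λ² + (p_l+p_r−p_l p_r)λ + p_l p_r)`, so the eigenvalues of `M` are `1` and
`Λ_{1,2} = −(1/2)(p_l+p_r−p_l p_r ∓ √((p_l+p_r−p_l p_r)² − 4 p_l p_r))`. -/
theorem time_state_transfer_matrix (pr pl : ℝ) :
    ((A0 pr pl + A1 pr pl).mulVec Rvec = Rvec ∧
      (A0 pl pr + A1 pl pr).mulVec Rvec = Rvec) ∧
    (1 + pr + pl ≠ 0 →
      Matrix.vecMul (Lvec pr pl) ((A0 pr pl + A1 pr pl) * (A0 pl pr + A1 pl pr))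
          = Lvec pr pl ∧
      dotProduct (Lvec pr pl) Rvec = 1) ∧
    (∀ lam : ℝ,
      Matrix.det (lam • (1 : Matrix (Fin 3) (Fin 3) ℝ)
          - (A0 pl pr + A1 pl pr) * (A0 pr pl + A1 pr pl)) =
        (lam - 1) * (lam ^ 2 + (pl + pr - pl * pr) * lam + pl * pr)) ∧
    (let Mc : Matrix (Fin 3) (Fin 3) ℂ :=
        ((A0 pl pr + A1 pl pr) * (A0 pr pl + A1 pr pl)).map (fun a : ℝ => (a : ℂ));
      let b : ℂ := (pl : ℂ) + (pr : ℂ) - (pl : ℂ) * (pr : ℂ);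
      let sq : ℂ := (b ^ 2 - 4 * (pl : ℂ) * (pr : ℂ)) ^ ((1 : ℂ) / 2);
      Matrix.det ((1 : ℂ) • (1 : Matrix (Fin 3) (Fin 3) ℂ) - Mc) = 0 ∧
      Matrix.det ((-(1 / 2) * (b - sq)) • (1 : Matrix (Fin 3) (Fin 3) ℂ) - Mc) = 0 ∧
      Matrix.det ((-(1 / 2) * (b + sq)) • (1 : Matrix (Fin 3) (Fin 3) ℂ) - Mc) = 0) := by
  refine ⟨⟨?_, ?_⟩, fun h => ⟨?_, ?_⟩, fun lam => ?_, ?_⟩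
  · funext i; fin_cases i <;>
      simp [A0, A1, Rvec, Matrix.mulVec, dotProduct, Fin.sum_univ_three] <;> ring
  · funext i; fin_cases i <;>
      simp [A0, A1, Rvec, Matrix.mulVec, dotProduct, Fin.sum_univ_three] <;> ring
  · funext i; fin_cases i <;>
      simp [A0, A1, Lvec, Matrix.vecMul, dotProduct, Matrix.mul_apply,
        Fin.sum_univ_three, Matrix.vecHead, Matrix.vecTail] <;>
      field_simp <;> ring
  · simp [Lvec, Rvec, dotProduct, Fin.sum_univ_three]
    field_simp
    ring
  · simp [A0, A1, Matrix.det_fin_three, Matrix.mul_apply, Fin.sum_univ_three,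
      Matrix.smul_apply, Matrix.sub_apply, Matrix.add_apply, Matrix.one_apply,
      Matrix.vecHead, Matrix.vecTail]
    ring
  · intro Mc b sq
    have hsq : sq ^ 2 = b ^ 2 - 4 * (pl : ℂ) * (pr : ℂ) := by
      show ((b ^ 2 - 4 * (pl : ℂ) * (pr : ℂ)) ^ ((1 : ℂ) / 2)) ^ 2 = _
      by_cases h : b ^ 2 - 4 * (pl : ℂ) * (pr : ℂ) = 0
      · rw [h, Complex.zero_cpow (by norm_num)]; ring
      · rw [pow_two, ← Complex.cpow_add _ _ h]
        norm_num
    refine ⟨?_, ?_, ?_⟩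
    · rw [detC]; ring
    · rw [detC]
      have : ((-(1 / 2) * (b - sq)) ^ 2 + ((pl : ℂ) + pr - pl * pr) * (-(1 / 2) * (b - sq))
          + pl * pr) = (sq ^ 2 - (b ^ 2 - 4 * pl * pr)) / 4 := by
        show _ = _
        rw [show ((pl : ℂ) + pr - pl * pr) = b from rfl]
        ring
      rw [this, hsq]; ring
    · rw [detC]
      have : ((-(1 / 2) * (b + sq)) ^ 2 + ((pl : ℂ) + pr - pl * pr) * (-(1 / 2) * (b + sq))
          + pl * pr) = (sq ^ 2 - (b ^ 2 - 4 * pl * pr)) / 4 := by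
        rw [show ((pl : ℂ) + pr - pl * pr) = b from rfl]
        ring
      rw [this, hsq]; ring
end Rule54
end
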